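/- Let σ be a feasible tour and let p < q be positions in Fin (2*n) such that σ p is a delivery node and σ q is a pickup node. Then the visiting sequence (Equiv.swap p q).trans σ — obtained from σ by exchanging the nodes visited at positions p and q — is a feasible tour. -/
import Mathlib


/-- A visiting sequence `σ` (where `σ k` is the node visited at position `k`) is a
feasible tour if every pickup node `i` (i.e. `(i : ℕ) < n`) is visited before its
paired delivery node `i + n`. -/
def IsFeasibleTour (n : ℕ) (σ : Equiv.Perm (Fin (2 * n))) : Prop :=
  ∀ i : Fin (2 * n), ∀ _h : (i : ℕ) < n,
    σ⁻¹ i < σ⁻¹ (⟨(i : ℕ) + n, by omega⟩ : Fin (2 * n))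

/-- InterBlock node exchange: if `p < q`, the node visited at position `p` is a
delivery node and the node visited at position `q` is a pickup node, then swapping
the nodes visited at positions `p` and `q` maps a feasible tour to a feasible
tour. -/
theorem interBlock_node_exchange_feasible (n : ℕ) (σ : Equiv.Perm (Fin (2 * n)))
    (hσ : IsFeasibleTour n σ) (p q : Fin (2 * n)) (hpq : p < q)
    (hp : n ≤ (σ p : ℕ)) (hq : (σ q : ℕ) < n) :
    IsFeasibleTour n ((Equiv.swap p q).trans σ) := by
  intro i hi
  set i' : Fin (2 * n) := ⟨(i : ℕ) + n, by omega⟩ with hi'def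
  have key : ∀ j, ((Equiv.swap p q).trans σ)⁻¹ j = Equiv.swap p q (σ⁻¹ j) := fun j => rfl
  rw [key, key]
  have hab : σ⁻¹ i < σ⁻¹ i' := hσ i hi
  have ha : σ⁻¹ i ≠ p := by
    intro h
    have : σ (σ⁻¹ i) = i := σ.apply_symm_apply i
    rw [h] at this
    rw [this] at hp
    omega
  have hb : σ⁻¹ i' ≠ q := by
    intro h
    have : σ (σ⁻¹ i') = i' := σ.apply_symm_apply i'
    rw [h] at this
    rw [this] at hq
    simp only [hi'def] at hq
    omega
  by_cases haq : σ⁻¹ i = q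
  · have hbp : σ⁻¹ i' ≠ p := by
      intro h
      rw [haq, h] at hab
      exact absurd hpq (not_lt.mpr hab.le)
    rw [haq, Equiv.swap_apply_right, Equiv.swap_apply_of_ne_of_ne hbp hb]
    calc p < q := hpq
    _ = σ⁻¹ i := haq.symm
    _ < σ⁻¹ i' := hab
  · rw [Equiv.swap_apply_of_ne_of_ne ha haq]
    by_cases hbp : σ⁻¹ i' = p
    · rw [hbp, Equiv.swap_apply_left]
      calc σ⁻¹ i < σ⁻¹ i' := hab
      _ = p := hbp
      _ < q := hpq
    · rw [Equiv.swap_apply_of_ne_of_ne hbp hb]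
      exact hab
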